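/- Assume in addition λ ≥ T²/4. Then for every t ∈ (0,T) the function t ↦ θ(t)² φ(t) is differentiable at t and |d/dt (θ(t)² φ(t))| ≤ (2 exp(2 μ M) + 1) · λ · T · θ(t)² φ(t)³. (The paper's weight estimate (2.32012)/(2.7) on the time derivative of θ²φ, with explicit constant.) -/

import Mathlib

/-- For `λ ≥ T²/4`, the function `t ↦ θ(t)² φ(t)` is differentiable on `(0,T)` with
`|(θ²φ)′(t)| ≤ (2 exp(2 μ M) + 1) · λ · T · θ(t)² φ(t)³`
(paper's weight estimate (2.32012)/(2.7), explicit constant). -/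
theorem carleman_weight_theta_sq_phi_deriv_bound
    (T μ lam M c : ℝ) (hT : 0 < T) (hμ : 1 ≤ μ) (hlam : 1 ≤ lam)
    (hM : 0 < M) (hc0 : 0 ≤ c) (hcM : c ≤ M)
    (hlamT : T ^ 2 / 4 ≤ lam)
    (α φ θ : ℝ → ℝ)
    (hα : ∀ t, α t = (Real.exp (μ * c) - Real.exp (2 * μ * M)) / (t * (T - t)))
    (hφ : ∀ t, φ t = Real.exp (μ * c) / (t * (T - t)))
    (hθ : ∀ t, θ t = Real.exp (lam * α t)) :
    ∀ t ∈ Set.Ioo (0 : ℝ) T,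
      DifferentiableAt ℝ (fun s => θ s ^ 2 * φ s) t ∧
        |deriv (fun s => θ s ^ 2 * φ s) t| ≤
          (2 * Real.exp (2 * μ * M) + 1) * lam * T * (θ t ^ 2 * φ t ^ 3) := by
  intro t ht
  obtain ⟨ht0, htT⟩ := ht
  have hTt : 0 < T - t := by linarith
  have hlam0 : (0:ℝ) < lam := by linarith
  set A := Real.exp (μ * c) - Real.exp (2 * μ * M) with hA
  set B := Real.exp (μ * c) with hB
  have hP : 0 < t * (T - t) := mul_pos ht0 hTt
  have hPne : t * (T - t) ≠ 0 := ne_of_gt hP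
  have hfun : (fun s => θ s ^ 2 * φ s)
      = fun s => Real.exp (2 * lam * (A / (s * (T - s)))) * (B / (s * (T - s))) := by
    funext s
    rw [hθ s, hφ s, hα s, sq, ← Real.exp_add]
    ring_nf
  have hu : HasDerivAt (fun s : ℝ => s * (T - s)) (T - 2 * t) t := by
    have h1 : HasDerivAt (fun s : ℝ => s * (T - s)) _ t := (hasDerivAt_id t).mul ((hasDerivAt_const t T).sub (hasDerivAt_id t))
    convert h1 using 1
    simp only [id_eq]
    ring
  have hAd : HasDerivAt (fun s => A / (s * (T - s)))
      (-(A * (T - 2 * t)) / (t * (T - t)) ^ 2) t := by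
    have h : HasDerivAt (fun s => A / (s * (T - s))) _ t := (hasDerivAt_const t A).div hu hPne
    convert h using 1
    ring
  have hBd : HasDerivAt (fun s => B / (s * (T - s)))
      (-(B * (T - 2 * t)) / (t * (T - t)) ^ 2) t := by
    have h : HasDerivAt (fun s => B / (s * (T - s))) _ t := (hasDerivAt_const t B).div hu hPne
    convert h using 1
    ring
  have hed : HasDerivAt (fun s => Real.exp (2 * lam * (A / (s * (T - s)))))
      (Real.exp (2 * lam * (A / (t * (T - t)))) *
        (2 * lam * (-(A * (T - 2 * t)) / (t * (T - t)) ^ 2))) t :=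
    (hAd.const_mul (2 * lam)).exp
  have hD : HasDerivAt (fun s => Real.exp (2 * lam * (A / (s * (T - s)))) * (B / (s * (T - s)))) _ t := hed.mul hBd
  rw [hfun]
  refine ⟨hD.differentiableAt, ?_⟩
  rw [hD.deriv]
  set P := t * (T - t) with hPdef
  set d := T - 2 * t with hd
  have hEeq : Real.exp (lam * (A / P)) ^ 2 = Real.exp (2 * lam * (A / P)) := by
    rw [sq, ← Real.exp_add]
    ring_nf
  rw [hθ t, hφ t, hα t, hEeq]
  set E := Real.exp (2 * lam * (A / P)) with hEdef
  have hE : 0 < E := Real.exp_pos _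
  have hB1 : 1 ≤ B := Real.one_le_exp (by positivity)
  have hB0 : 0 < B := by linarith
  have hA0 : A ≤ 0 := by
    rw [hA]
    have h1 : μ * c ≤ 2 * μ * M := by nlinarith
    have := Real.exp_le_exp.mpr h1
    linarith
  have hAlow : -Real.exp (2 * μ * M) ≤ A := by
    rw [hA]
    have := Real.exp_pos (μ * c)
    linarith
  have hPlam : P ≤ lam := by
    rw [hPdef]
    nlinarith [sq_nonneg (T - 2 * t)]
  have hdT : |d| ≤ T := by
    rw [abs_le]
    constructor <;> rw [hd] <;> linarith
  have habs2 : |2 * lam * A + P| ≤ (2 * Real.exp (2 * μ * M) + 1) * lam := by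
    have he0 : 0 < Real.exp (2 * μ * M) := Real.exp_pos _
    rw [abs_le]
    constructor
    · nlinarith [mul_le_mul_of_nonneg_left hAlow hlam0.le]
    · nlinarith [mul_nonpos_of_nonneg_of_nonpos hlam0.le hA0]
  have hLHS : E * (2 * lam * (-(A * d) / P ^ 2)) * (B / P) + E * (-(B * d) / P ^ 2)
      = E * B / P ^ 3 * (-(d * (2 * lam * A + P))) := by
    field_simp
    ring
  rw [hLHS]
  have hpos : 0 < E * B / P ^ 3 := by positivity
  have hK0 : (0:ℝ) ≤ E * T * ((2 * Real.exp (2 * μ * M) + 1) * lam) / P ^ 3 :=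
    div_nonneg (mul_nonneg (mul_nonneg hE.le hT.le)
      (mul_nonneg (by positivity) hlam0.le)) (by positivity)
  have hB2 : 1 ≤ B ^ 2 := by nlinarith
  have hBB : B ≤ B ^ 3 := by
    calc B = B * 1 := (mul_one B).symm
      _ ≤ B * B ^ 2 := mul_le_mul_of_nonneg_left hB2 hB0.le
      _ = B ^ 3 := by ring
  calc |E * B / P ^ 3 * (-(d * (2 * lam * A + P)))|
      = E * B / P ^ 3 * |d * (2 * lam * A + P)| := by
        rw [abs_mul, abs_neg, abs_of_pos hpos]
    _ ≤ E * B / P ^ 3 * (T * ((2 * Real.exp (2 * μ * M) + 1) * lam)) := by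
        apply mul_le_mul_of_nonneg_left _ hpos.le
        rw [abs_mul]
        exact mul_le_mul hdT habs2 (abs_nonneg _) hT.le
    _ = E * T * ((2 * Real.exp (2 * μ * M) + 1) * lam) / P ^ 3 * B := by ring
    _ ≤ E * T * ((2 * Real.exp (2 * μ * M) + 1) * lam) / P ^ 3 * B ^ 3 :=
        mul_le_mul_of_nonneg_left hBB hK0
    _ = (2 * Real.exp (2 * μ * M) + 1) * lam * T * (E * (B / P) ^ 3) := by
        rw [div_pow]
        ring
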